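/- Lemma 8: for every natural number k ≥ 2, the sequence L(·, k) terminates; that is, there exists a natural number n ≥ 1 such that L(n, k) = 0. -/

import Mathlib

/-- `hsub b u m` substitutes the value `u` for the base `b` throughout the
hereditary base-`b` representation of `m` (with `hsub b u 0 = 0`). -/
def hsub (b u : ℕ) (m : ℕ) : ℕ :=
  if m = 0 then 0
  else
    u ^ hsub b u (Nat.log b m) * (m / b ^ Nat.log b m) + hsub b u (m % b ^ Nat.log b m)
termination_by m
decreasing_by
  · exact Nat.log_lt_self b (by assumption)
  · have hpos : 0 < b ^ Nat.log b m := by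
      rcases Nat.eq_zero_or_pos b with hb | hb
      · simp [hb]
      · exact Nat.pow_pos hb
    exact lt_of_lt_of_le (Nat.mod_lt _ hpos) (Nat.pow_log_le_self b (by assumption))

/-- Goodstein's base-change ("bumping") function: replace the base `b` by `b + 1`
throughout the hereditary base-`b` representation of `m` (with `B b 0 = 0`). -/
def B (b m : ℕ) : ℕ := hsub b (b + 1) m

/-- The Goodstein sequence of `m`: `G 1 m = m`, and `G (k+1) m = B (k+1) (G k m) - 1`
for `k ≥ 1` (truncated subtraction), so the `k`-th term is written in hereditary
base `k + 1`. -/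
def G : ℕ → ℕ → ℕ
  | 0, m => m
  | 1, m => m
  | (k + 2), m => B (k + 2) (G (k + 1) m) - 1

/-- The auxiliary Goodstein-type sequence: `L 1 k = k ^ k` (written in hereditary
base `k`), and `L (n+1) k = B (k+n-1) (L n k) - 1` for `n ≥ 1` (truncated
subtraction), so the `n`-th term is written in hereditary base `k + n - 1`. -/
def L : ℕ → ℕ → ℕ
  | 0, k => k ^ k
  | 1, k => k ^ k
  | (n + 2), k => B (k + n) (L (n + 1) k) - 1

/-- `O b m` is the ordinal obtained by substituting `ω` for the base `b`
throughout the hereditary base-`b` representation of `m` (with `O b 0 = 0`). -/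
noncomputable def O (b : ℕ) (m : ℕ) : Ordinal :=
  if m = 0 then 0
  else
    Ordinal.omega0 ^ O b (Nat.log b m) * ((m / b ^ Nat.log b m : ℕ) : Ordinal)
      + O b (m % b ^ Nat.log b m)
termination_by m
decreasing_by
  · exact Nat.log_lt_self b (by assumption)
  · have hpos : 0 < b ^ Nat.log b m := by
      rcases Nat.eq_zero_or_pos b with hb | hb
      · simp [hb]
      · exact Nat.pow_pos hb
    exact lt_of_lt_of_le (Nat.mod_lt _ hpos) (Nat.pow_log_le_self b (by assumption))

private lemma O_zero' (b : ℕ) : O.{0} b 0 = 0 := by rw [O]; simp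

private lemma O_eq' (b m : ℕ) (hm : m ≠ 0) :
    O.{0} b m = Ordinal.omega0 ^ O b (Nat.log b m) * ((m / b ^ Nat.log b m : ℕ) : Ordinal)
      + O b (m % b ^ Nat.log b m) := by
  rw [O]; simp [hm]

private lemma hsub_zero' (b u : ℕ) : hsub b u 0 = 0 := by rw [hsub]; simp

private lemma hsub_eq' (b u m : ℕ) (hm : m ≠ 0) :
    hsub b u m = u ^ hsub b u (Nat.log b m) * (m / b ^ Nat.log b m)
      + hsub b u (m % b ^ Nat.log b m) := by
  rw [hsub]; simp [hm]

private lemma hsub_pos' (b u m : ℕ) (hu : 1 ≤ u) (hm : m ≠ 0) : 0 < hsub b u m := by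
  rw [hsub_eq' b u m hm]
  have h1 : 0 < u ^ hsub b u (Nat.log b m) := Nat.pow_pos hu
  have h2 : 0 < m / b ^ Nat.log b m :=
    Nat.div_pos (Nat.pow_log_le_self b hm) (by
      rcases Nat.eq_zero_or_pos b with hb | hb
      · simp [hb, Nat.log_zero_left]
      · exact Nat.pow_pos hb)
  have := Nat.mul_pos h1 h2
  omega

private lemma O_bound_aux (b N : ℕ) (hb : 2 ≤ b)
    (H : ∀ x y : ℕ, x < y → y ≤ N → O.{0} b x < O b y) :
    ∀ m e : ℕ, e ≤ N → m < b ^ e → O.{0} b m < Ordinal.omega0 ^ O b e := by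
  intro m
  induction m using Nat.strong_induction_on with
  | _ m IH =>
    intro e heN hme
    rcases eq_or_ne m 0 with rfl | hm
    · rw [O_zero']; exact Ordinal.opow_pos _ Ordinal.omega0_pos
    · set f := Nat.log b m with hf
      set a := m / b ^ f with ha
      set r := m % b ^ f with hr
      have hb1 : 1 < b := hb
      have hpow : 0 < b ^ f := Nat.pow_pos (by omega)
      have hfe : f < e := Nat.log_lt_of_lt_pow hm hme
      have hrbf : r < b ^ f := Nat.mod_lt _ hpow
      have hrm : r < m := lt_of_lt_of_le hrbf (Nat.pow_log_le_self b hm)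
      have hOr : O b r < Ordinal.omega0 ^ O b f := IH r hrm f (by omega) hrbf
      have hcast : ((a : Ordinal) + 1) < Ordinal.omega0 := by
        have := Ordinal.nat_lt_omega0 (a + 1)
        push_cast at this
        exact this
      calc O.{0} b m = Ordinal.omega0 ^ O b f * (a : Ordinal) + O b r := O_eq' b m hm
        _ < Ordinal.omega0 ^ O b f * (a : Ordinal) + Ordinal.omega0 ^ O b f :=
            add_lt_add_right hOr _
        _ = Ordinal.omega0 ^ O b f * ((a : Ordinal) + 1) := by rw [mul_add, mul_one]
        _ ≤ Ordinal.omega0 ^ O b f * Ordinal.omega0 := mul_le_mul_right hcast.le _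
        _ = Ordinal.omega0 ^ (O b f + 1) := by
            rw [Ordinal.add_one_eq_succ, Ordinal.opow_succ]
        _ ≤ Ordinal.omega0 ^ O b e := by
            apply Ordinal.opow_le_opow_right Ordinal.omega0_pos
            rw [Ordinal.add_one_eq_succ]
            exact Order.succ_le_of_lt (H f e hfe heN)

private lemma O_mono_aux (b : ℕ) (hb : 2 ≤ b) :
    ∀ N x y : ℕ, x < y → y ≤ N → O.{0} b x < O b y := by
  intro N
  induction N using Nat.strong_induction_on with
  | _ N IH =>
    intro x y hxy hyN
    have hy : y ≠ 0 := by omega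
    have hb1 : 1 < b := hb
    have H : ∀ x' y' : ℕ, x' < y' → y' ≤ N - 1 → O b x' < O b y' :=
      fun x' y' h h' => IH (N - 1) (by omega) x' y' h h'
    have Hb := O_bound_aux b (N - 1) hb H
    set ey := Nat.log b y with hey
    set ay := y / b ^ ey with hay
    set ry := y % b ^ ey with hry
    have hpow : 0 < b ^ ey := Nat.pow_pos (by omega)
    have heyN : ey ≤ N - 1 := by
      have := Nat.log_lt_self b hy; omega
    have hay1 : 1 ≤ ay := Nat.div_pos (Nat.pow_log_le_self b hy) hpow
    have hryb : ry < b ^ ey := Nat.mod_lt _ hpow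
    have hOry : O b ry < Ordinal.omega0 ^ O b ey := Hb ry ey heyN hryb
    have hOy : O b y = Ordinal.omega0 ^ O b ey * (ay : Ordinal) + O b ry := O_eq' b y hy
    have hone : (1 : Ordinal) ≤ (ay : Ordinal) := by exact_mod_cast hay1
    by_cases hxbig : x < b ^ ey
    · -- x is below b ^ ey
      have h1 : O b x < Ordinal.omega0 ^ O b ey := Hb x ey heyN hxbig
      calc O b x < Ordinal.omega0 ^ O b ey := h1
        _ = Ordinal.omega0 ^ O b ey * 1 := (mul_one _).symm
        _ ≤ Ordinal.omega0 ^ O b ey * (ay : Ordinal) := mul_le_mul_right hone _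
        _ ≤ O b y := by rw [hOy]; exact le_self_add
    · push_neg at hxbig
      have hx : x ≠ 0 := by
        intro h; rw [h] at hxbig; have : 0 < b ^ ey := hpow; omega
      have hlogx : Nat.log b x = ey := by
        apply Nat.log_eq_of_pow_le_of_lt_pow hxbig
        calc x < y := hxy
          _ < b ^ (ey + 1) := Nat.lt_pow_succ_log_self hb1 y
      set ax := x / b ^ ey with hax
      set rx := x % b ^ ey with hrx
      have hOx : O b x = Ordinal.omega0 ^ O b ey * (ax : Ordinal) + O b rx := by
        have := O_eq' b x hx
        rwa [hlogx] at this
      have haxy : ax ≤ ay := Nat.div_le_div_right hxy.le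
      have hrxb : rx < b ^ ey := Nat.mod_lt _ hpow
      rcases lt_or_eq_of_le haxy with hlt | heq
      · -- smaller quotient
        have hOrx : O b rx < Ordinal.omega0 ^ O b ey := Hb rx ey heyN hrxb
        have hcast : ((ax : Ordinal) + 1) ≤ (ay : Ordinal) := by
          have : (ax : ℕ) + 1 ≤ ay := hlt
          exact_mod_cast this
        calc O b x = Ordinal.omega0 ^ O b ey * (ax : Ordinal) + O b rx := hOx
          _ < Ordinal.omega0 ^ O b ey * (ax : Ordinal) + Ordinal.omega0 ^ O b ey :=
              add_lt_add_right hOrx _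
          _ = Ordinal.omega0 ^ O b ey * ((ax : Ordinal) + 1) := by rw [mul_add, mul_one]
          _ ≤ Ordinal.omega0 ^ O b ey * (ay : Ordinal) := mul_le_mul_right hcast _
          _ ≤ O b y := by rw [hOy]; exact le_self_add
      · -- equal quotient, compare remainders
        have hdx := Nat.div_add_mod x (b ^ ey)
        have hdy := Nat.div_add_mod y (b ^ ey)
        have hrxy : rx < ry := by
          rw [← hax, ← hrx, heq] at hdx
          rw [← hay, ← hry] at hdy
          omega
        have hryN : ry ≤ N - 1 := by
          have : ry < y := lt_of_lt_of_le hryb (Nat.pow_log_le_self b hy)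
          omega
        have hOr : O b rx < O b ry := H rx ry hrxy hryN
        rw [hOx, hOy, heq]
        exact add_lt_add_right hOr _

private lemma O_strictMono' (b : ℕ) (hb : 2 ≤ b) : StrictMono (O.{0} b) :=
  fun x y h => O_mono_aux b hb y x y h le_rfl

private lemma O_bound' (b : ℕ) (hb : 2 ≤ b) {m e : ℕ} (h : m < b ^ e) :
    O.{0} b m < Ordinal.omega0 ^ O b e :=
  O_bound_aux b e hb (fun x y hxy hyN => O_mono_aux b hb e x y hxy hyN) m e le_rfl h

private lemma O_pow' (b : ℕ) (hb : 2 ≤ b) (x : ℕ) :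
    O.{0} b (b ^ x) = Ordinal.omega0 ^ O b x := by
  have hb1 : 1 < b := hb
  have hpos : 0 < b ^ x := Nat.pow_pos (by omega)
  rw [O_eq' b _ hpos.ne', Nat.log_pow hb1, Nat.div_self hpos, Nat.mod_self, O_zero']
  simp

private lemma O_bump (b : ℕ) (hb : 2 ≤ b) :
    ∀ m : ℕ, O.{0} (b + 1) (hsub b (b + 1) m) = O b m := by
  intro m
  induction m using Nat.strong_induction_on with
  | _ m IH =>
    rcases eq_or_ne m 0 with rfl | hm
    · rw [hsub_zero', O_zero', O_zero']
    · set e := Nat.log b m with he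
      set a := m / b ^ e with ha
      set r := m % b ^ e with hr
      have hb1 : 1 < b := hb
      have hpow : 0 < b ^ e := Nat.pow_pos (by omega)
      have ha1 : 1 ≤ a := Nat.div_pos (Nat.pow_log_le_self b hm) hpow
      have hab : a < b := by
        rw [ha]
        rw [Nat.div_lt_iff_lt_mul hpow]
        calc m < b ^ (e + 1) := Nat.lt_pow_succ_log_self hb1 m
          _ = b * b ^ e := by ring
      have hrbe : r < b ^ e := Nat.mod_lt _ hpow
      have hem : e < m := Nat.log_lt_self b hm
      have hrm : r < m := lt_of_lt_of_le hrbe (Nat.pow_log_le_self b hm)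
      have hbb : 2 ≤ b + 1 := by omega
      set e' := hsub b (b + 1) e with he'
      set r' := hsub b (b + 1) r with hr'
      have hub : hsub b (b + 1) m = (b + 1) ^ e' * a + r' := hsub_eq' b (b + 1) m hm
      have hOe' : O (b + 1) e' = O b e := IH e hem
      have hOr' : O (b + 1) r' = O b r := IH r hrm
      have hkey : O (b + 1) r' < O (b + 1) ((b + 1) ^ e') := by
        rw [hOr', O_pow' (b + 1) hbb e', hOe']
        exact O_bound' b hb hrbe
      have hre : r' < (b + 1) ^ e' := (O_strictMono' (b + 1) hbb).lt_iff_lt.mp hkey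
      have hp1 : 0 < (b + 1) ^ e' := Nat.pow_pos (by omega)
      have hlow : (b + 1) ^ e' ≤ (b + 1) ^ e' * a + r' := by
        calc (b + 1) ^ e' = (b + 1) ^ e' * 1 := (mul_one _).symm
          _ ≤ (b + 1) ^ e' * a := Nat.mul_le_mul_left _ ha1
          _ ≤ (b + 1) ^ e' * a + r' := Nat.le_add_right _ _
      have hhigh : (b + 1) ^ e' * a + r' < (b + 1) ^ (e' + 1) := by
        calc (b + 1) ^ e' * a + r' < (b + 1) ^ e' * a + (b + 1) ^ e' := by omega
          _ = (b + 1) ^ e' * (a + 1) := by ring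
          _ ≤ (b + 1) ^ e' * (b + 1) := Nat.mul_le_mul_left _ (by omega)
          _ = (b + 1) ^ (e' + 1) := by ring
      have hlog : Nat.log (b + 1) ((b + 1) ^ e' * a + r') = e' :=
        Nat.log_eq_of_pow_le_of_lt_pow hlow hhigh
      have hdiv : ((b + 1) ^ e' * a + r') / (b + 1) ^ e' = a := by
        rw [Nat.mul_add_div hp1, Nat.div_eq_of_lt hre, add_zero]
      have hmod : ((b + 1) ^ e' * a + r') % (b + 1) ^ e' = r' := by
        rw [Nat.mul_add_mod, Nat.mod_eq_of_lt hre]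
      have hne : (b + 1) ^ e' * a + r' ≠ 0 := by
        have := Nat.mul_pos hp1 ha1; omega
      rw [hub, O_eq' (b + 1) _ hne, hlog, hdiv, hmod, hOe', hOr', O_eq' b m hm]

/-- **Lemma 8**: for every `k ≥ 2`, the sequence `L · k` terminates: there
exists `n ≥ 1` such that `L n k = 0`. -/
theorem goodstein_lemma8 (k : ℕ) (hk : 2 ≤ k) : ∃ n : ℕ, 1 ≤ n ∧ L n k = 0 := by
  suffices h : ∀ α : Ordinal.{0}, ∀ n : ℕ, O.{0} (k + n) (L (n + 1) k) = α → ∃ m : ℕ, 1 ≤ m ∧ L m k = 0 by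
    exact h (O (k + 0) (L 1 k)) 0 rfl
  intro α
  induction α using Ordinal.induction with
  | _ α IH =>
    intro n hα
    rcases eq_or_ne (L (n + 1) k) 0 with h0 | h0
    · exact ⟨n + 1, by omega, h0⟩
    · have hb : 2 ≤ k + n := by omega
      have hstep : L (n + 2) k = hsub (k + n) (k + n + 1) (L (n + 1) k) - 1 := rfl
      have hpos : 0 < hsub (k + n) (k + n + 1) (L (n + 1) k) :=
        hsub_pos' _ _ _ (by omega) h0
      have hlt : L (n + 2) k < hsub (k + n) (k + n + 1) (L (n + 1) k) := by omega
      have hdec : O.{0} (k + (n + 1)) (L (n + 1 + 1) k) < α := by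
        rw [← hα]
        calc O.{0} (k + (n + 1)) (L (n + 1 + 1) k)
            < O (k + n + 1) (hsub (k + n) (k + n + 1) (L (n + 1) k)) := by
              have := (O_strictMono' (k + n + 1) (by omega)) hlt
              simpa [show k + (n + 1) = k + n + 1 by ring] using this
          _ = O (k + n) (L (n + 1) k) := O_bump (k + n) hb _
      exact IH _ hdec (n + 1) rfl
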